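/- Define C₁(x) = (d + b₁(c₁ + x/μ₁))/(c₁ + c₂ + x/μ₁) for x ≥ 0 with parameters δ = 19/31, λ = 4√2 − 1, c₁ = δ/v, c₂ = (1−δ)/v, μ₁ = λv², b₁ = (λ+2)v, d = 2(λ+2), where v > 0. Then C₁(x) + x ≥ 2v(5√2 + 1) for all x ≥ 0, with equality if and only if x = v(√2 + 1). -/

import Mathlib

theorem stmt_9 (v : ℝ) (hv : 0 < v)
    (δ lam c₁ c₂ μ₁ b₁ d : ℝ)
    (hδ : δ = 19 / 31) (hlam : lam = 4 * Real.sqrt 2 - 1)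
    (hc₁ : c₁ = δ / v) (hc₂ : c₂ = (1 - δ) / v) (hμ₁ : μ₁ = lam * v ^ 2)
    (hb₁ : b₁ = (lam + 2) * v) (hd : d = 2 * (lam + 2))
    (C₁ : ℝ → ℝ)
    (hC₁ : ∀ x, C₁ x = (d + b₁ * (c₁ + x / μ₁)) / (c₁ + c₂ + x / μ₁)) :
    ∀ x : ℝ, 0 ≤ x →
      C₁ x + x ≥ 2 * v * (5 * Real.sqrt 2 + 1) ∧
      (C₁ x + x = 2 * v * (5 * Real.sqrt 2 + 1) ↔ x = v * (Real.sqrt 2 + 1)) := by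
  intro x hx
  set s := Real.sqrt 2 with hs_def
  have hs2 : s ^ 2 = 2 := Real.sq_sqrt (by norm_num)
  have hs1 : 1 < s := by
    nlinarith [Real.sqrt_nonneg 2]
  have hlam_pos : 0 < lam := by rw [hlam]; nlinarith
  have hden : 0 < x + lam * v := by positivity
  have hμpos : 0 < μ₁ := by rw [hμ₁]; positivity
  have hden2 : 0 < c₁ + c₂ + x / μ₁ := by
    rw [hc₁, hc₂, hμ₁]
    have : δ / v + (1 - δ) / v = 1 / v := by field_simp; ring
    rw [this]
    positivity
  have key : C₁ x + x = 2 * v * (5 * s + 1) + (x - v * (s + 1)) ^ 2 / (x + lam * v) := by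
    rw [hC₁]
    subst hδ hlam hc₁ hc₂ hμ₁ hb₁ hd
    have hv' : v ≠ 0 := hv.ne'
    have hden' : x + (4 * s - 1) * v ≠ 0 := hden.ne'
    field_simp
    linear_combination (25 * v ^ 2 * x - 25 * v ^ 3 + 100 * s * v ^ 3) * hs2
  have hsq : 0 ≤ (x - v * (s + 1)) ^ 2 / (x + lam * v) := by positivity
  constructor
  · rw [key]; linarith
  · rw [key]
    constructor
    · intro h
      have h0 : (x - v * (s + 1)) ^ 2 / (x + lam * v) = 0 := by linarith
      rw [div_eq_zero_iff] at h0
      rcases h0 with h1 | h1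
      · have := pow_eq_zero_iff (n := 2) (by norm_num) |>.mp h1
        linarith
      · linarith
    · intro h
      rw [h]
      simp
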